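/- Let k, ℓ ∈ ℕ with k ≤ ℓ and let E be an ℓ × k integer matrix. Then there exists a k × ℓ integer matrix K with K·E = I_k if and only if the greatest common divisor of the determinants of all full square submatrices of E equals 1. -/

import Mathlib

open Matrix

/-- Bezout for finite gcds over ℤ. -/
lemma bezout_finset {ι : Type*} [DecidableEq ι] (s : Finset ι) (f : ι → ℤ) :
    ∃ c : ι → ℤ, ∑ ρ ∈ s, c ρ * f ρ = s.gcd f := by
  classical
  induction s using Finset.induction_on with
  | empty => exact ⟨0, by simp⟩
  | @insert a s ha ih =>
    obtain ⟨c, hc⟩ := ih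
    set g := s.gcd f with hg
    refine ⟨fun ρ => if ρ = a then Int.gcdA (f a) g else c ρ * Int.gcdB (f a) g, ?_⟩
    rw [Finset.sum_insert ha, Finset.gcd_insert, ← hg]
    have h1 : ∑ ρ ∈ s, (if ρ = a then Int.gcdA (f a) g else c ρ * Int.gcdB (f a) g) * f ρ
        = (∑ ρ ∈ s, c ρ * f ρ) * Int.gcdB (f a) g := by
      rw [Finset.sum_mul]
      refine Finset.sum_congr rfl fun ρ hρ => ?_
      have : ρ ≠ a := fun h => ha (h ▸ hρ)
      rw [if_neg this]; ring
    rw [h1, hc]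
    have h2 : GCDMonoid.gcd (f a) g = (Int.gcd (f a) g : ℤ) := by
      rw [Int.coe_gcd]
    rw [h2, Int.gcd_eq_gcd_ab (f a) g]
    simp only [eq_self_iff_true, if_true, ite_true]
    ring

lemma pick_rows_mul {k ℓ : ℕ} (ρ : Fin k → Fin ℓ) (E : Matrix (Fin ℓ) (Fin k) ℤ) :
    ((1 : Matrix (Fin ℓ) (Fin ℓ) ℤ).submatrix ρ id) * E = E.submatrix ρ id := by
  ext i j
  simp [Matrix.mul_apply, Matrix.one_apply]

/-- An `ℓ × k` integer matrix `E` with `k ≤ ℓ` has a left inverse integer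
matrix (`K * E = I_k`) iff the gcd of the determinants of all full square submatrices
of `E` equals `1`. -/
theorem stmt7 {k ℓ : ℕ} (hkl : k ≤ ℓ) (E : Matrix (Fin ℓ) (Fin k) ℤ) :
    (∃ K : Matrix (Fin k) (Fin ℓ) ℤ, K * E = (1 : Matrix (Fin k) (Fin k) ℤ)) ↔
      Finset.gcd (Finset.univ.filter (fun ρ : Fin k ↪ Fin ℓ => StrictMono ρ))
        (fun ρ => (E.submatrix ρ id).det) = 1 := by
  classical
  set S := Finset.univ.filter (fun ρ : Fin k ↪ Fin ℓ => StrictMono ρ) with hS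
  set g := Finset.gcd S (fun ρ => (E.submatrix ρ id).det) with hgdef
  constructor
  · rintro ⟨K, hK⟩
    -- g divides det (K * E) = 1
    have key : g ∣ (K * E).det := by
      -- expand det as a multilinear map over rows
      have hstep : (K * E).det =
          (Matrix.detRowAlternating (R := ℤ) (n := Fin k)).toMultilinearMap
            (fun i => ∑ l, K i l • E l) := by
        congr 1
        ext i j
        simp [Matrix.mul_apply]
      have expand : (K * E).det
          = ∑ f : Fin k → Fin ℓ, (∏ i, K i (f i)) • (E.submatrix f id).det := by
        rw [hstep,
          (Matrix.detRowAlternating (R := ℤ) (n := Fin k)).toMultilinearMap.map_sum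
            (fun i (l : Fin ℓ) => K i l • E l)]
        refine Finset.sum_congr rfl fun f _ => ?_
        rw [(Matrix.detRowAlternating (R := ℤ) (n := Fin k)).toMultilinearMap.map_smul_univ
          (fun i => K i (f i)) (fun i => E (f i))]
        rfl
      rw [expand]
      refine Finset.dvd_sum fun f _ => ?_
      by_cases hf : Function.Injective f
      · -- factor f = ρ ∘ σ with ρ strictly monotone
        have hcard : (Finset.univ.image f).card = k := by
          rw [Finset.card_image_of_injective _ hf, Finset.card_univ, Fintype.card_fin]
        set s := Finset.univ.image f with hs
        let e : Fin k ≃o {x // x ∈ s} := s.orderIsoOfFin hcard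
        let ρ : Fin k → Fin ℓ := fun i => (e i : Fin ℓ)
        have hρmono : StrictMono ρ := fun a b hab => by
          exact_mod_cast e.strictMono hab
        have hmem : ∀ i, f i ∈ s := fun i => Finset.mem_image_of_mem f (Finset.mem_univ i)
        let σ : Fin k → Fin k := fun i => e.symm ⟨f i, hmem i⟩
        have hσinj : Function.Injective σ := by
          intro a b hab
          have h' : (⟨f a, hmem a⟩ : {x // x ∈ s}) = ⟨f b, hmem b⟩ :=
            e.symm.injective hab
          exact hf (Subtype.mk_eq_mk.mp h')
        have hσbij : Function.Bijective σ :=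
          (Fintype.bijective_iff_injective_and_card σ).mpr ⟨hσinj, rfl⟩
        let τ : Equiv.Perm (Fin k) := Equiv.ofBijective σ hσbij
        have hfρσ : f = ρ ∘ τ := by
          funext i
          show f i = (e (e.symm ⟨f i, hmem i⟩) : Fin ℓ)
          simp
        have hmemS : (⟨ρ, hρmono.injective⟩ : Fin k ↪ Fin ℓ) ∈ S := by
          simp only [hS, Finset.mem_filter, Finset.mem_univ, true_and]
          exact hρmono
        have hdvdρ : g ∣ (E.submatrix ρ id).det := by
          exact Finset.gcd_dvd hmemS
        rw [hfρσ,
          show E.submatrix (ρ ∘ τ) id = (E.submatrix ρ id).submatrix τ id by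
            rw [Matrix.submatrix_submatrix]; rfl,
          Matrix.det_permute, smul_eq_mul]
        exact Dvd.dvd.mul_left (hdvdρ.mul_left _) _
      · -- repeated rows give zero determinant
        have hzero : (E.submatrix f id).det = 0 := by
          obtain ⟨a, b, hab, hne⟩ : ∃ a b, f a = f b ∧ a ≠ b := by
            simp only [Function.Injective] at hf
            push_neg at hf
            obtain ⟨a, b, h1, h2⟩ := hf
            exact ⟨a, b, h1, h2⟩
          refine Matrix.det_zero_of_row_eq hne ?_
          funext j
          simp [hab]
        rw [hzero, smul_zero]
        exact dvd_zero g
    rw [hK, Matrix.det_one] at key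
    calc g = normalize g := Finset.normalize_gcd.symm
      _ = 1 := normalize_eq_one.mpr (isUnit_of_dvd_one key)
  · intro hg1
    obtain ⟨c, hc⟩ := bezout_finset S (fun ρ => (E.submatrix ρ id).det)
    rw [← hgdef, hg1] at hc
    refine ⟨∑ ρ ∈ S, c ρ • ((E.submatrix ρ id).adjugate *
      ((1 : Matrix (Fin ℓ) (Fin ℓ) ℤ).submatrix ρ id)), ?_⟩
    rw [Matrix.sum_mul]
    have h3 : ∀ ρ ∈ S, (c ρ • ((E.submatrix ρ id).adjugate *
        ((1 : Matrix (Fin ℓ) (Fin ℓ) ℤ).submatrix ρ id))) * E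
        = (c ρ * (E.submatrix ρ id).det) • (1 : Matrix (Fin k) (Fin k) ℤ) := by
      intro ρ _
      rw [Matrix.smul_mul, Matrix.mul_assoc, pick_rows_mul, Matrix.adjugate_mul,
        smul_smul]
    rw [Finset.sum_congr rfl h3, ← Finset.sum_smul, hc, one_smul]
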